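/- For any Hilbert space H and any t > 0, the Gaussian kernel (x,y) ↦ exp(−t ‖x − y‖²_H) is strictly positive definite on H × H: for any n distinct vectors x_1,…,x_n ∈ H and any nonzero (c_1,…,c_n) ∈ ℂ^n, ∑_{i,j} c_i conj(c_j) exp(−t‖x_i − x_j‖²) > 0. -/

import Mathlib

open scoped ComplexOrder ComplexConjugate

/-- `k` is strictly positive definite on `X`. -/
def IsStrictPosKernel {X : Type*} (k : X → X → ℂ) : Prop :=
  ∀ (n : ℕ) (x : Fin n → X), Function.Injective x →
    ∀ c : Fin n → ℂ, c ≠ 0 →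
      0 < ∑ i, ∑ j, c i * conj (c j) * k (x i) (x j)

namespace GaussianSPD

variable {n : ℕ}

/-- The sesquilinear form attached to a real kernel matrix. -/
noncomputable def qf (M : Fin n → Fin n → ℝ) (u w : Fin n → ℂ) : ℂ :=
  ∑ i, ∑ j, u i * conj (w j) * (M i j : ℂ)

/-- Kernels admitting a finite real Gram factorisation. -/
def IsGram (M : Fin n → Fin n → ℝ) : Prop :=
  ∃ (F : Type) (_ : Fintype F) (m : F → Fin n → ℝ),
    ∀ i j, M i j = ∑ a, m a i * m a j

theorem IsGram.symm {M : Fin n → Fin n → ℝ} (h : IsGram M) (i j : Fin n) :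
    M i j = M j i := by
  obtain ⟨F, _, m, hm⟩ := h
  simp only [hm]
  exact Finset.sum_congr rfl fun a _ => mul_comm _ _

theorem IsGram.one : IsGram (fun _ _ : Fin n => (1 : ℝ)) :=
  ⟨PUnit, inferInstance, fun _ _ => 1, fun i j => by simp⟩

theorem IsGram.mul {M M' : Fin n → Fin n → ℝ} (h : IsGram M) (h' : IsGram M') :
    IsGram (fun i j => M i j * M' i j) := by
  obtain ⟨F, _, m, hm⟩ := h
  obtain ⟨F', _, m', hm'⟩ := h'
  refine ⟨F × F', inferInstance, fun a i => m a.1 i * m' a.2 i, fun i j => ?_⟩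
  simp only []
  rw [hm, hm', Finset.sum_mul_sum]
  rw [Fintype.sum_prod_type]
  exact Finset.sum_congr rfl fun a _ => Finset.sum_congr rfl fun b _ => by ring

theorem IsGram.pow {M : Fin n → Fin n → ℝ} (h : IsGram M) (k : ℕ) :
    IsGram (fun i j => M i j ^ k) := by
  induction k with
  | zero => simpa using IsGram.one
  | succ k ih => simpa [pow_succ] using ih.mul h

theorem IsGram.qf_eq {M : Fin n → Fin n → ℝ} (h : IsGram M) (u : Fin n → ℂ) :
    ∃ r : ℝ, 0 ≤ r ∧ qf M u u = (r : ℂ) := by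
  obtain ⟨F, _, m, hm⟩ := h
  refine ⟨∑ a, Complex.normSq (∑ i, u i * (m a i : ℂ)),
    Finset.sum_nonneg fun a _ => Complex.normSq_nonneg _, ?_⟩
  have key : ∀ a : F, ((Complex.normSq (∑ i, u i * (m a i : ℂ)) : ℝ) : ℂ)
      = ∑ i, ∑ j, u i * conj (u j) * ((m a i : ℂ) * (m a j : ℂ)) := by
    intro a
    rw [← Complex.mul_conj, map_sum, Finset.sum_mul_sum]
    refine Finset.sum_congr rfl fun i _ => Finset.sum_congr rfl fun j _ => ?_
    rw [map_mul, Complex.conj_ofReal]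
    ring
  rw [Complex.ofReal_sum]
  simp only [key]
  rw [Finset.sum_comm]
  unfold qf
  refine Finset.sum_congr rfl fun i _ => ?_
  rw [Finset.sum_comm]
  refine Finset.sum_congr rfl fun j _ => ?_
  rw [hm]
  push_cast
  rw [Finset.mul_sum]

theorem qf_add_left (M : Fin n → Fin n → ℝ) (u u' w : Fin n → ℂ) :
    qf M (u + u') w = qf M u w + qf M u' w := by
  unfold qf
  rw [← Finset.sum_add_distrib]
  refine Finset.sum_congr rfl fun i _ => ?_
  rw [← Finset.sum_add_distrib]
  exact Finset.sum_congr rfl fun j _ => by simp; ring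

theorem qf_smul_left (M : Fin n → Fin n → ℝ) (z : ℂ) (u w : Fin n → ℂ) :
    qf M (z • u) w = z * qf M u w := by
  unfold qf
  rw [Finset.mul_sum]
  refine Finset.sum_congr rfl fun i _ => ?_
  rw [Finset.mul_sum]
  exact Finset.sum_congr rfl fun j _ => by simp; ring

theorem qf_smul_right (M : Fin n → Fin n → ℝ) (z : ℂ) (u w : Fin n → ℂ) :
    qf M u (z • w) = conj z * qf M u w := by
  unfold qf
  rw [Finset.mul_sum]
  refine Finset.sum_congr rfl fun i _ => ?_
  rw [Finset.mul_sum]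
  exact Finset.sum_congr rfl fun j _ => by simp; ring

theorem qf_add_right (M : Fin n → Fin n → ℝ) (u w w' : Fin n → ℂ) :
    qf M u (w + w') = qf M u w + qf M u w' := by
  unfold qf
  rw [← Finset.sum_add_distrib]
  refine Finset.sum_congr rfl fun i _ => ?_
  rw [← Finset.sum_add_distrib]
  exact Finset.sum_congr rfl fun j _ => by simp; ring

theorem qf_conj {M : Fin n → Fin n → ℝ} (hM : ∀ i j, M i j = M j i) (u w : Fin n → ℂ) :
    conj (qf M u w) = qf M w u := by
  unfold qf
  rw [map_sum, Finset.sum_comm]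
  refine Finset.sum_congr rfl fun i _ => ?_
  rw [map_sum]
  refine Finset.sum_congr rfl fun j _ => ?_
  simp only [map_mul, Complex.conj_conj, Complex.conj_ofReal]
  rw [hM j i]
  ring

theorem qf_expand (M : Fin n → Fin n → ℝ) (u w : Fin n → ℂ) (z : ℂ) :
    qf M (u + z • w) (u + z • w) =
      qf M u u + conj z * qf M u w + z * qf M w u + (z * conj z) * qf M w w := by
  rw [qf_add_left, qf_smul_left, qf_add_right, qf_smul_right, qf_add_right, qf_smul_right]
  ring

theorem qf_cs {M : Fin n → Fin n → ℝ} (hM : ∀ i j, M i j = M j i)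
    (hpos : ∀ u, ∃ r : ℝ, 0 ≤ r ∧ qf M u u = (r : ℂ))
    {w : Fin n → ℂ} (hw : qf M w w = 0) (u : Fin n → ℂ) : qf M u w = 0 := by
  by_contra hne
  set Z := qf M u w with hZ
  have hZsq : 0 < Complex.normSq Z := by
    simpa [Complex.normSq_pos] using hne
  obtain ⟨r0, hr0, hq0⟩ := hpos u
  set R : ℝ := (r0 + 1) / (2 * Complex.normSq Z) with hR
  obtain ⟨r, hr, hq⟩ := hpos (u + (-(R : ℂ) * Z) • w)
  rw [qf_expand, hq0, hw, mul_zero, add_zero] at hq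
  have hherm : qf M w u = conj Z := by rw [← qf_conj hM]
  rw [hherm] at hq
  have hconj : conj (-(R : ℂ) * Z) = -(R : ℂ) * conj Z := by
    simp [Complex.conj_ofReal]
  rw [hconj] at hq
  have hZZ : conj Z * Z = (Complex.normSq Z : ℂ) := by
    rw [mul_comm, Complex.mul_conj]
  rw [← hZ] at hq
  have e1 : -(R : ℂ) * conj Z * Z = -(R : ℂ) * (Complex.normSq Z : ℂ) := by
    rw [mul_assoc, hZZ]
  have e2 : -(R : ℂ) * Z * conj Z = -(R : ℂ) * (Complex.normSq Z : ℂ) := by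
    rw [mul_assoc, Complex.mul_conj]
  rw [e1, e2] at hq
  have hq' : (r : ℝ) = r0 - 2 * R * Complex.normSq Z := by
    have : ((r0 - 2 * R * Complex.normSq Z : ℝ) : ℂ) = (r : ℂ) := by
      rw [← hq]; push_cast; ring
    exact_mod_cast this.symm
  have hRn : R * Complex.normSq Z = (r0 + 1) / 2 := by
    rw [hR]; field_simp
  rw [hq'] at hr
  linarith

theorem qf_sum_right (M : Fin n → Fin n → ℝ) (u : Fin n → ℂ) (α : Fin n → ℂ)
    (W : Fin n → (Fin n → ℂ)) :
    qf M u (fun j => ∑ k, α k * W k j) = ∑ k, conj (α k) * qf M u (W k) := by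
  unfold qf
  have h1 : ∀ i j : Fin n, u i * conj (∑ k, α k * W k j) * (M i j : ℂ)
      = ∑ k, conj (α k) * (u i * conj (W k j) * (M i j : ℂ)) := by
    intro i j
    rw [map_sum, Finset.mul_sum, Finset.sum_mul]
    refine Finset.sum_congr rfl fun k _ => ?_
    rw [map_mul]; ring
  simp only [h1]
  have h2 : (∑ i, ∑ j, ∑ k, conj (α k) * (u i * conj (W k j) * (M i j : ℂ)))
      = ∑ k, ∑ i, ∑ j, conj (α k) * (u i * conj (W k j) * (M i j : ℂ)) := by
    have e1 : ∀ i : Fin n, (∑ j, ∑ k, conj (α k) * (u i * conj (W k j) * (M i j : ℂ)))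
        = ∑ k, ∑ j, conj (α k) * (u i * conj (W k j) * (M i j : ℂ)) :=
      fun i => Finset.sum_comm
    simp only [e1]
    exact Finset.sum_comm
  rw [h2]
  refine Finset.sum_congr rfl fun k _ => ?_
  rw [Finset.mul_sum]
  refine Finset.sum_congr rfl fun i _ => ?_
  rw [Finset.mul_sum]

theorem real_exp_eq_tsum (x : ℝ) : Real.exp x = ∑' k : ℕ, x ^ k / (Nat.factorial k) := by
  rw [Real.exp_eq_exp_ℝ, NormedSpace.exp_eq_tsum_div]

theorem qf_exp_eq {g : Fin n → Fin n → ℝ} (hg : IsGram g) {s : ℝ} (hs : 0 ≤ s) (u : Fin n → ℂ) :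
    ∃ r : ℝ, 0 ≤ r ∧ qf (fun i j => Real.exp (s * g i j)) u u = (r : ℂ) := by
  choose τ hτ0 hτ using fun k : ℕ => (hg.pow k).qf_eq u
  have hsm : ∀ i j : Fin n,
      Summable (fun k : ℕ => u i * conj (u j) * (((s * g i j) ^ k / (Nat.factorial k) : ℝ) : ℂ)) :=
    fun i j => ((Complex.summable_ofReal.mpr (Real.summable_pow_div_factorial _)).mul_left _)
  have step1 : qf (fun i j => Real.exp (s * g i j)) u u
      = ∑ i, ∑ j, ∑' k : ℕ, u i * conj (u j) * (((s * g i j) ^ k / (Nat.factorial k) : ℝ) : ℂ) := by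
    unfold qf
    refine Finset.sum_congr rfl fun i _ => Finset.sum_congr rfl fun j _ => ?_
    beta_reduce
    rw [real_exp_eq_tsum, Complex.ofReal_tsum, ← tsum_mul_left]
  have step2 : qf (fun i j => Real.exp (s * g i j)) u u
      = ∑' k : ℕ, ∑ i, ∑ j, u i * conj (u j) * (((s * g i j) ^ k / (Nat.factorial k) : ℝ) : ℂ) := by
    rw [step1]
    have e1 : ∀ i : Fin n,
        (∑ j, ∑' k : ℕ, u i * conj (u j) * (((s * g i j) ^ k / (Nat.factorial k) : ℝ) : ℂ))
          = ∑' k : ℕ, ∑ j, u i * conj (u j) * (((s * g i j) ^ k / (Nat.factorial k) : ℝ) : ℂ) :=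
      fun i => (Summable.tsum_finsetSum (fun j _ => hsm i j)).symm
    simp only [e1]
    exact (Summable.tsum_finsetSum (fun i _ => summable_sum (fun j _ => hsm i j))).symm
  have step3 : ∀ k : ℕ,
      (∑ i, ∑ j, u i * conj (u j) * (((s * g i j) ^ k / (Nat.factorial k) : ℝ) : ℂ))
        = ((s ^ k / (Nat.factorial k) * τ k : ℝ) : ℂ) := by
    intro k
    have : ∀ i j : Fin n, (((s * g i j) ^ k / (Nat.factorial k) : ℝ) : ℂ)
        = ((s ^ k / (Nat.factorial k) : ℝ) : ℂ) * ((g i j ^ k : ℝ) : ℂ) := by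
      intro i j; push_cast; ring
    simp only [this]
    have : (∑ i, ∑ j, u i * conj (u j) * (((s ^ k / (Nat.factorial k) : ℝ) : ℂ) * ((g i j ^ k : ℝ) : ℂ)))
        = ((s ^ k / (Nat.factorial k) : ℝ) : ℂ) * qf (fun i j => g i j ^ k) u u := by
      unfold qf
      rw [Finset.mul_sum]
      refine Finset.sum_congr rfl fun i _ => ?_
      rw [Finset.mul_sum]
      exact Finset.sum_congr rfl fun j _ => by push_cast; ring
    rw [this, hτ k]
    push_cast
    ring
  refine ⟨∑' k : ℕ, s ^ k / (Nat.factorial k) * τ k, tsum_nonneg ?_, ?_⟩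
  · exact fun k => mul_nonneg (div_nonneg (pow_nonneg hs k) (Nat.cast_nonneg _)) (hτ0 k)
  · rw [step2, Complex.ofReal_tsum]
    exact tsum_congr step3

theorem vandermonde_solve {lam : Fin n → ℂ} (h : Function.Injective lam) (b : Fin n → ℂ) :
    ∃ α : Fin n → ℂ, ∀ j, ∑ k, α k * lam j ^ (k : ℕ) = b j := by
  set V := Matrix.vandermonde lam with hV
  have hdet : V.det ≠ 0 := by
    rw [hV, Matrix.det_vandermonde]
    refine Finset.prod_ne_zero_iff.mpr fun i _ => Finset.prod_ne_zero_iff.mpr fun j hj => ?_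
    exact sub_ne_zero.mpr fun e => (Finset.mem_Ioi.mp hj).ne' (h e)
  refine ⟨V⁻¹.mulVec b, fun j => ?_⟩
  have hmul : V * V⁻¹ = 1 := Matrix.mul_nonsing_inv V (isUnit_iff_ne_zero.mpr hdet)
  have : (V.mulVec (V⁻¹.mulVec b)) j = b j := by
    rw [Matrix.mulVec_mulVec, hmul, Matrix.one_mulVec]
  rw [← this]
  simp only [Matrix.mulVec, dotProduct, hV, Matrix.vandermonde]
  exact Finset.sum_congr rfl fun k _ => mul_comm _ _

section Hilbert

variable (𝕜 : Type*) {H : Type*} [RCLike 𝕜] [NormedAddCommGroup H] [InnerProductSpace 𝕜 H]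

theorem isGram_inner_re (y : Fin n → H) :
    IsGram (fun i j => RCLike.re (inner 𝕜 (y i) (y j) : 𝕜)) := by
  set T := Submodule.span 𝕜 (Set.range y) with hT
  haveI : FiniteDimensional 𝕜 T := FiniteDimensional.span_of_finite 𝕜 (Set.finite_range y)
  set b := stdOrthonormalBasis 𝕜 T with hb
  have hy : ∀ i, y i ∈ T := fun i => Submodule.subset_span ⟨i, rfl⟩
  set y' : Fin n → T := fun i => ⟨y i, hy i⟩ with hy'
  refine ⟨Fin (Module.finrank 𝕜 T) × Bool, inferInstance,
    fun a i => if a.2 then RCLike.im (inner 𝕜 (b a.1) (y' i) : 𝕜)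
      else RCLike.re (inner 𝕜 (b a.1) (y' i) : 𝕜), fun i j => ?_⟩
  have h1 : (inner 𝕜 (y i) (y j) : 𝕜)
      = ∑ r, (inner 𝕜 (y' i) (b r) : 𝕜) * (inner 𝕜 (b r) (y' j) : 𝕜) := by
    rw [b.sum_inner_mul_inner (y' i) (y' j)]
    rfl
  have h2 : ∀ r, RCLike.re ((inner 𝕜 (y' i) (b r) : 𝕜) * (inner 𝕜 (b r) (y' j) : 𝕜))
      = RCLike.re (inner 𝕜 (b r) (y' i) : 𝕜) * RCLike.re (inner 𝕜 (b r) (y' j) : 𝕜)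
        + RCLike.im (inner 𝕜 (b r) (y' i) : 𝕜) * RCLike.im (inner 𝕜 (b r) (y' j) : 𝕜) := by
    intro r
    rw [← inner_conj_symm (b r) (y' i), RCLike.mul_re, RCLike.conj_re, RCLike.conj_im]
    ring
  simp only []
  rw [h1, map_sum, Fintype.sum_prod_type]
  refine Finset.sum_congr rfl fun r _ => ?_
  rw [h2 r, Fintype.sum_bool]
  norm_num
  ring

theorem exists_re_inner_ne_zero {ι : Type*} (S : Finset ι) (w : ι → H)
    (hw : ∀ p ∈ S, w p ≠ 0) :
    ∃ v : H, ∀ p ∈ S, RCLike.re (inner 𝕜 (w p) v : 𝕜) ≠ 0 := by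
  classical
  revert hw
  refine Finset.induction_on S ?_ ?_
  · intro _; exact ⟨0, by simp⟩
  · rintro a S ha ih hw
    obtain ⟨v, hv⟩ := ih fun p hp => hw p (Finset.mem_insert_of_mem hp)
    have hwa : w a ≠ 0 := hw a (Finset.mem_insert_self a S)
    set G : ι → ℝ := fun q => RCLike.re (inner 𝕜 (w q) (w a) : 𝕜) with hG
    have hGa : G a ≠ 0 := by
      rw [hG]
      simp only []
      rw [inner_self_eq_norm_sq]
      exact pow_ne_zero _ (norm_ne_zero_iff.mpr hwa)
    set T : Finset ℝ := (insert a S).image fun q => -(RCLike.re (inner 𝕜 (w q) v : 𝕜)) / G q with hTdef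
    obtain ⟨ε, hε⟩ := Infinite.exists_notMem_finset T
    refine ⟨v + (ε : 𝕜) • w a, fun p hp => ?_⟩
    have hre : RCLike.re (inner 𝕜 (w p) (v + (ε : 𝕜) • w a) : 𝕜)
        = RCLike.re (inner 𝕜 (w p) v : 𝕜) + ε * G p := by
      rw [inner_add_right, inner_smul_right, map_add, RCLike.re_ofReal_mul]
    intro h0
    by_cases hGp : G p = 0
    · have hpS : p ∈ S := by
        rcases Finset.mem_insert.mp hp with h | h
        · exact absurd (h ▸ hGp) hGa
        · exact h
      rw [hre, hGp, mul_zero, add_zero] at h0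
      exact hv p hpS h0
    · have hεval : ε = -(RCLike.re (inner 𝕜 (w p) v : 𝕜)) / G p := by
        rw [hre] at h0
        field_simp
        linarith
      exact hε (hεval ▸ Finset.mem_image_of_mem _ hp)

theorem exists_sep (x : Fin n → H) (hx : Function.Injective x) :
    ∃ v : H, (‖v‖ = 1 ∨ v = 0) ∧
      ∀ i j : Fin n, i ≠ j → RCLike.re (inner 𝕜 (x i - x j) v : 𝕜) ≠ 0 := by
  classical
  obtain ⟨v₀, hv₀⟩ := exists_re_inner_ne_zero 𝕜
    (Finset.univ.filter fun p : Fin n × Fin n => p.1 ≠ p.2)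
    (fun p => x p.1 - x p.2)
    (fun p hp => sub_ne_zero.mpr (hx.ne (Finset.mem_filter.mp hp).2))
  by_cases h0 : v₀ = 0
  · refine ⟨0, Or.inr rfl, fun i j hij => ?_⟩
    have := hv₀ (i, j) (by simp [hij])
    rw [h0] at this
    simp at this
  · refine ⟨((‖v₀‖⁻¹ : ℝ) : 𝕜) • v₀, Or.inl ?_, fun i j hij => ?_⟩
    · rw [norm_smul, RCLike.norm_ofReal, abs_of_nonneg (inv_nonneg.mpr (norm_nonneg _))]
      exact inv_mul_cancel₀ (norm_ne_zero_iff.mpr h0)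
    · rw [inner_smul_right, RCLike.re_ofReal_mul]
      exact mul_ne_zero (inv_ne_zero (norm_ne_zero_iff.mpr h0))
        (hv₀ (i, j) (by simp [hij]))

end Hilbert

end GaussianSPD

/-- For any (real or complex) Hilbert space `H` and any `t > 0`, the Gaussian kernel
`(x,y) ↦ exp (−t ‖x − y‖²)` is strictly positive definite on `H × H`. -/
theorem gaussian_isStrictPosKernel
    {𝕜 H : Type*} [RCLike 𝕜] [NormedAddCommGroup H] [InnerProductSpace 𝕜 H] [CompleteSpace H]
    (t : ℝ) (ht : 0 < t) :
    IsStrictPosKernel (fun x y : H => (Real.exp (-t * ‖x - y‖ ^ 2) : ℂ)) := by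
  intro n x hx c hc
  classical
  obtain ⟨i0, hi0⟩ := Function.ne_iff.mp hc
  rw [Pi.zero_apply] at hi0
  obtain ⟨v, hvnorm, hvsep⟩ := GaussianSPD.exists_sep 𝕜 x hx
  set s : ℝ := 2 * t with hs
  have hs0 : (0 : ℝ) ≤ s := by rw [hs]; linarith
  set lam : Fin n → ℝ := fun i => RCLike.re (inner 𝕜 (x i) v : 𝕜) with hlam
  set E : Fin n → ℝ := fun i => Real.exp (-t * ‖x i‖ ^ 2) with hE
  set d : Fin n → ℂ := fun i => c i * ((E i : ℝ) : ℂ) with hd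
  set y : Fin n → H := fun i => x i - ((lam i : ℝ) : 𝕜) • v with hy
  set g : Fin n → Fin n → ℝ := fun i j => RCLike.re (inner 𝕜 (y i) (y j) : 𝕜) with hg
  have hgram : GaussianSPD.IsGram g := GaussianSPD.isGram_inner_re 𝕜 y
  -- the inner products of the x's decompose
  have hvx : ∀ i, RCLike.re (inner 𝕜 v (x i) : 𝕜) = lam i := by
    intro i
    rw [← inner_conj_symm v (x i), RCLike.conj_re]
  have hgval : ∀ i j, g i j = RCLike.re (inner 𝕜 (x i) (x j) : 𝕜) - lam i * lam j := by
    intro i j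
    have hyin : (inner 𝕜 (y i) (y j) : 𝕜)
        = inner 𝕜 (x i) (x j) - ((lam j : ℝ) : 𝕜) * inner 𝕜 (x i) v
          - ((lam i : ℝ) : 𝕜) * inner 𝕜 v (x j)
          + ((lam i : ℝ) : 𝕜) * (((lam j : ℝ) : 𝕜) * inner 𝕜 v v) := by
      rw [hy]
      simp only [inner_sub_left, inner_sub_right, inner_smul_left, inner_smul_right,
        RCLike.conj_ofReal]
      ring
    rw [hg]
    simp only []
    rw [hyin, map_add, map_sub, map_sub, RCLike.re_ofReal_mul, RCLike.re_ofReal_mul,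
      RCLike.re_ofReal_mul, RCLike.re_ofReal_mul, inner_self_eq_norm_sq, hvx j]
    rcases hvnorm with h1 | h0
    · rw [h1]
      have : RCLike.re (inner 𝕜 (x i) v : 𝕜) = lam i := by rw [hlam]
      rw [this]
      ring
    · have hlam0 : ∀ i, lam i = 0 := by
        intro i; rw [hlam]; simp only []; rw [h0, inner_zero_right, map_zero]
      rw [hlam0 i, hlam0 j]
      ring
  -- kernel decomposition
  have hK : ∀ i j, Real.exp (-t * ‖x i - x j‖ ^ 2)
      = (E i * E j) * (Real.exp (s * (lam i * lam j)) * Real.exp (s * g i j)) := by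
    intro i j
    rw [hE]
    simp only []
    rw [← Real.exp_add, ← Real.exp_add, ← Real.exp_add]
    congr 1
    have hnorm : ‖x i - x j‖ ^ 2
        = ‖x i‖ ^ 2 - 2 * RCLike.re (inner 𝕜 (x i) (x j) : 𝕜) + ‖x j‖ ^ 2 :=
      norm_sub_sq (𝕜 := 𝕜) (x i) (x j)
    rw [hnorm, hgval i j, hs]
    ring
  -- weight vectors
  set W : ℕ → Fin n → ℂ := fun k i => d i * ((lam i : ℝ) : ℂ) ^ k with hW
  choose σ hσ0 hσ using fun k : ℕ => GaussianSPD.qf_exp_eq hgram hs0 (W k)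
  set B : Fin n → Fin n → ℝ := fun i j => Real.exp (s * g i j) with hB
  -- summability of the building blocks
  have hsum_ij : ∀ i j : Fin n, Summable (fun k : ℕ =>
      (d i * conj (d j) * ((B i j : ℝ) : ℂ)) *
        (((s * (lam i * lam j)) ^ k / (Nat.factorial k) : ℝ) : ℂ)) :=
    fun i j => (Complex.summable_ofReal.mpr (Real.summable_pow_div_factorial _)).mul_left _
  -- termwise expansion of the kernel
  have hterm : ∀ i j : Fin n, c i * conj (c j) * ((Real.exp (-t * ‖x i - x j‖ ^ 2) : ℝ) : ℂ)
      = ∑' k : ℕ, (d i * conj (d j) * ((B i j : ℝ) : ℂ)) *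
          (((s * (lam i * lam j)) ^ k / (Nat.factorial k) : ℝ) : ℂ) := by
    intro i j
    rw [tsum_mul_left, ← Complex.ofReal_tsum, ← GaussianSPD.real_exp_eq_tsum, hK i j, hd]
    simp only [hB, map_mul, Complex.conj_ofReal]
    push_cast
    ring
  -- per-k identification with the quadratic forms
  have hk_eq : ∀ k : ℕ,
      (∑ i, ∑ j, (d i * conj (d j) * ((B i j : ℝ) : ℂ)) *
          (((s * (lam i * lam j)) ^ k / (Nat.factorial k) : ℝ) : ℂ))
        = ((s ^ k / (Nat.factorial k) * σ k : ℝ) : ℂ) := by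
    intro k
    have h1 : ∀ i j : Fin n, (d i * conj (d j) * ((B i j : ℝ) : ℂ)) *
          (((s * (lam i * lam j)) ^ k / (Nat.factorial k) : ℝ) : ℂ)
        = ((s ^ k / (Nat.factorial k) : ℝ) : ℂ) *
            (W k i * conj (W k j) * ((B i j : ℝ) : ℂ)) := by
      intro i j
      rw [hW]
      simp only [map_mul, Complex.conj_ofReal, map_pow]
      push_cast
      ring
    simp only [h1, ← Finset.mul_sum]
    rw [show (∑ i, ∑ j, W k i * conj (W k j) * ((B i j : ℝ) : ℂ))
        = GaussianSPD.qf B (W k) (W k) from rfl, hσ k]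
    push_cast
    ring
  -- the real coefficient sequence
  set ρ : ℕ → ℝ := fun k => s ^ k / (Nat.factorial k) * σ k with hρ
  have hρ0 : ∀ k, 0 ≤ ρ k := fun k =>
    mul_nonneg (div_nonneg (pow_nonneg hs0 k) (Nat.cast_nonneg _)) (hσ0 k)
  have hsum2 : Summable (fun k : ℕ => ∑ i, ∑ j,
      (d i * conj (d j) * ((B i j : ℝ) : ℂ)) *
        (((s * (lam i * lam j)) ^ k / (Nat.factorial k) : ℝ) : ℂ)) :=
    summable_sum fun i _ => summable_sum fun j _ => hsum_ij i j
  have hρsum : Summable ρ :=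
    Complex.summable_ofReal.mp (hsum2.congr hk_eq)
  -- the whole quadratic form equals the real series
  have hQ : (∑ i, ∑ j, c i * conj (c j) * ((Real.exp (-t * ‖x i - x j‖ ^ 2) : ℝ) : ℂ))
      = ((∑' k : ℕ, ρ k : ℝ) : ℂ) := by
    have e0 : (∑ i, ∑ j, c i * conj (c j) * ((Real.exp (-t * ‖x i - x j‖ ^ 2) : ℝ) : ℂ))
        = ∑ i, ∑ j, ∑' k : ℕ, (d i * conj (d j) * ((B i j : ℝ) : ℂ)) *
            (((s * (lam i * lam j)) ^ k / (Nat.factorial k) : ℝ) : ℂ) :=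
      Finset.sum_congr rfl fun i _ => Finset.sum_congr rfl fun j _ => hterm i j
    have e1 : ∀ i : Fin n, (∑ j, ∑' k : ℕ, (d i * conj (d j) * ((B i j : ℝ) : ℂ)) *
            (((s * (lam i * lam j)) ^ k / (Nat.factorial k) : ℝ) : ℂ))
        = ∑' k : ℕ, ∑ j, (d i * conj (d j) * ((B i j : ℝ) : ℂ)) *
            (((s * (lam i * lam j)) ^ k / (Nat.factorial k) : ℝ) : ℂ) :=
      fun i => (Summable.tsum_finsetSum fun j _ => hsum_ij i j).symm
    rw [e0]
    simp only [e1]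
    rw [(Summable.tsum_finsetSum fun i _ => summable_sum fun j _ => hsum_ij i j).symm]
    rw [tsum_congr hk_eq, Complex.ofReal_tsum]
  -- strict positivity of some coefficient
  have hdi0 : d i0 ≠ 0 := by
    rw [hd]
    exact mul_ne_zero hi0 (Complex.ofReal_ne_zero.mpr (Real.exp_ne_zero _))
  have hlaminj : Function.Injective fun i : Fin n => ((lam i : ℝ) : ℂ) := by
    intro i j hij
    by_contra hne
    refine hvsep i j hne ?_
    have hij' : lam i = lam j := by
      simp only [Complex.ofReal_inj] at hij
      exact hij
    rw [inner_sub_left, map_sub, sub_eq_zero]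
    exact hij'
  have hBsymm : ∀ i j, B i j = B j i := by
    intro i j
    rw [hB]
    simp only []
    rw [hgram.symm i j]
  have hBpos : ∀ u, ∃ r : ℝ, 0 ≤ r ∧ GaussianSPD.qf B u u = (r : ℂ) := fun u =>
    GaussianSPD.qf_exp_eq hgram hs0 u
  have hex : ∃ k : ℕ, 0 < σ k := by
    by_contra hkc
    push_neg at hkc
    have hσz : ∀ k, σ k = 0 := fun k => le_antisymm (hkc k) (hσ0 k)
    have hWz : ∀ k : ℕ, GaussianSPD.qf B (W k) (W k) = 0 := by
      intro k
      rw [hσ k, hσz k, Complex.ofReal_zero]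
    have hcs : ∀ (u : Fin n → ℂ) (k : ℕ), GaussianSPD.qf B u (W k) = 0 :=
      fun u k => GaussianSPD.qf_cs hBsymm hBpos (hWz k) u
    obtain ⟨α, hα⟩ := GaussianSPD.vandermonde_solve hlaminj
      (fun j => if j = i0 then (d i0)⁻¹ else 0)
    set δ : Fin n → ℂ := fun j => if j = i0 then 1 else 0 with hδ
    have hδW : δ = fun j => ∑ k : Fin n, α k * W (k : ℕ) j := by
      funext j
      have e2 : (∑ k : Fin n, α k * W (k : ℕ) j)
          = d j * ∑ k : Fin n, α k * ((lam j : ℝ) : ℂ) ^ (k : ℕ) := by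
        rw [Finset.mul_sum]
        refine Finset.sum_congr rfl fun k _ => ?_
        rw [hW]
        ring
      rw [hδ]
      simp only [e2, hα j]
      by_cases hji : j = i0
      · rw [if_pos hji, if_pos hji, hji, mul_inv_cancel₀ hdi0]
      · rw [if_neg hji, if_neg hji, mul_zero]
    have h1 : GaussianSPD.qf B δ δ = ((B i0 i0 : ℝ) : ℂ) := by
      unfold GaussianSPD.qf
      rw [hδ]
      simp [apply_ite, Finset.sum_ite_eq']
    have h2 : GaussianSPD.qf B δ δ = 0 := by
      rw [show GaussianSPD.qf B δ δ
          = GaussianSPD.qf B δ (fun j => ∑ k : Fin n, α k * W (k : ℕ) j) by rw [← hδW]]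
      rw [GaussianSPD.qf_sum_right]
      exact Finset.sum_eq_zero fun k _ => by rw [hcs δ (k : ℕ), mul_zero]
    rw [h1] at h2
    have : B i0 i0 = 0 := by exact_mod_cast h2
    exact Real.exp_ne_zero _ this
  -- conclude
  show 0 < ∑ i, ∑ j, c i * conj (c j) * ((Real.exp (-t * ‖x i - x j‖ ^ 2) : ℝ) : ℂ)
  rw [hQ, Complex.zero_lt_real]
  obtain ⟨k0, hk0⟩ := hex
  have hρk0 : 0 < ρ k0 := by
    refine mul_pos (div_pos (pow_pos ?_ k0) ?_) hk0
    · rw [hs]; linarith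
    · exact_mod_cast Nat.factorial_pos k0
  exact lt_of_lt_of_le hρk0 (Summable.le_tsum hρsum k0 fun j _ => hρ0 j)
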